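/- Define m_d := ∫₀^{π/2} θ^d · sin(2θ) dθ for natural numbers d. Then m_d · (2/π)^d · d² → π²/2 as d → ∞; that is, m_d ∼ (π²/(2d²)) · (π/2)^d for large d. -/

import Mathlib

open Real MeasureTheory Filter

lemma my_sin_ge_sub_cube {x : ℝ} (hx : 0 ≤ x) : x - x ^ 3 / 6 ≤ Real.sin x := by
  have hd : ∀ y : ℝ, HasDerivAt (fun y : ℝ => Real.sin y - y + y ^ 3 / 6)
      (Real.cos y - 1 + y ^ 2 / 2) y := by
    intro y
    have h1 := ((Real.hasDerivAt_sin y).sub (hasDerivAt_id y)).add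
      ((hasDerivAt_pow 3 y).div_const 6)
    refine h1.congr_deriv ?_
    simp
    ring
  have key : MonotoneOn (fun y : ℝ => Real.sin y - y + y ^ 3 / 6) (Set.Ici 0) := by
    apply monotoneOn_of_deriv_nonneg (convex_Ici 0)
    · exact Continuous.continuousOn (by fun_prop)
    · intro y _
      exact ((hd y).differentiableAt).differentiableWithinAt
    · intro y _
      rw [(hd y).deriv]
      nlinarith [Real.one_sub_sq_div_two_le_cos (x := y)]
  have h0 := key Set.self_mem_Ici (Set.mem_Ici.mpr hx) hx
  simp only [Real.sin_zero] at h0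
  linarith

theorem stmt_2 :
    Filter.Tendsto
      (fun d : ℕ => (∫ θ in (0 : ℝ)..(π / 2), θ ^ d * Real.sin (2 * θ)) * (2 / π) ^ d * (d : ℝ) ^ 2)
      Filter.atTop (nhds (π ^ 2 / 2)) := by
  have hπ : (0:ℝ) < π := Real.pi_pos
  have hπ0 : (π:ℝ) ≠ 0 := ne_of_gt hπ
  -- closed form for ∫ θ^n over [0, π/2]
  have hpow : ∀ n : ℕ, (∫ θ in (0:ℝ)..(π/2), θ ^ n) = (π/2) ^ (n+1) / (n+1) := by
    intro n
    rw [integral_pow]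
    simp [zero_pow (Nat.succ_ne_zero n)]
  -- linear integral
  have int_lin : ∀ d : ℕ, (∫ θ in (0:ℝ)..(π/2), θ ^ d * (π - 2 * θ))
      = π * ((π/2) ^ (d+1) / (d+1)) - 2 * ((π/2) ^ (d+2) / (d+2)) := by
    intro d
    have h : (∫ θ in (0:ℝ)..(π/2), θ ^ d * (π - 2 * θ))
        = ∫ θ in (0:ℝ)..(π/2), (π * θ ^ d - 2 * θ ^ (d+1)) := by
      apply intervalIntegral.integral_congr
      intro θ _; ring
    rw [h, intervalIntegral.integral_sub (Continuous.intervalIntegrable (by fun_prop : Continuous fun θ : ℝ => π * θ ^ d) _ _)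
        (Continuous.intervalIntegrable (by fun_prop : Continuous fun θ : ℝ => 2 * θ ^ (d+1)) _ _),
      intervalIntegral.integral_const_mul, intervalIntegral.integral_const_mul, hpow, hpow]
    push_cast
    ring
  -- cubic integral
  have int_cub : ∀ d : ℕ, (∫ θ in (0:ℝ)..(π/2), θ ^ d * (π - 2 * θ) ^ 3)
      = π^3 * ((π/2) ^ (d+1) / (d+1)) - 6 * π^2 * ((π/2) ^ (d+2) / (d+2))
        + 12 * π * ((π/2) ^ (d+3) / (d+3)) - 8 * ((π/2) ^ (d+4) / (d+4)) := by
    intro d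
    have h : (∫ θ in (0:ℝ)..(π/2), θ ^ d * (π - 2 * θ) ^ 3)
        = ∫ θ in (0:ℝ)..(π/2),
            ((π^3 * θ ^ d - 6 * π^2 * θ ^ (d+1)) + (12 * π * θ ^ (d+2) - 8 * θ ^ (d+3))) := by
      apply intervalIntegral.integral_congr
      intro θ _; ring
    rw [h, intervalIntegral.integral_add, intervalIntegral.integral_sub, intervalIntegral.integral_sub,
      intervalIntegral.integral_const_mul, intervalIntegral.integral_const_mul,
      intervalIntegral.integral_const_mul, intervalIntegral.integral_const_mul,
      hpow, hpow, hpow, hpow]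
    · push_cast
      ring
    · exact (continuous_const.mul (continuous_pow _)).intervalIntegrable _ _
    · exact (continuous_const.mul (continuous_pow _)).intervalIntegrable _ _
    · exact (continuous_const.mul (continuous_pow _)).intervalIntegrable _ _
    · exact (continuous_const.mul (continuous_pow _)).intervalIntegrable _ _
    · exact ((continuous_const.mul (continuous_pow _)).sub
        (continuous_const.mul (continuous_pow _))).intervalIntegrable _ _
    · exact ((continuous_const.mul (continuous_pow _)).sub
        (continuous_const.mul (continuous_pow _))).intervalIntegrable _ _
  -- upper bound on the integral
  have hub : ∀ d : ℕ, (∫ θ in (0:ℝ)..(π/2), θ ^ d * Real.sin (2 * θ))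
      ≤ ∫ θ in (0:ℝ)..(π/2), θ ^ d * (π - 2 * θ) := by
    intro d
    apply intervalIntegral.integral_mono_on (by positivity)
    · exact (Continuous.intervalIntegrable (by fun_prop)) _ _
    · exact (Continuous.intervalIntegrable (by fun_prop)) _ _
    · intro θ hθ
      have h1 : 0 ≤ π - 2 * θ := by
        have := hθ.2; linarith
      have h2 : Real.sin (2 * θ) = Real.sin (π - 2 * θ) := (Real.sin_pi_sub (2*θ)).symm
      have h3 : Real.sin (π - 2 * θ) ≤ π - 2 * θ := Real.sin_le h1
      have h4 : (0:ℝ) ≤ θ ^ d := pow_nonneg hθ.1 d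
      rw [h2]
      exact mul_le_mul_of_nonneg_left h3 h4
  -- lower bound on the integral
  have hlb : ∀ d : ℕ, (∫ θ in (0:ℝ)..(π/2), θ ^ d * (π - 2 * θ))
        - (1/6) * (∫ θ in (0:ℝ)..(π/2), θ ^ d * (π - 2 * θ) ^ 3)
      ≤ ∫ θ in (0:ℝ)..(π/2), θ ^ d * Real.sin (2 * θ) := by
    intro d
    have h : (∫ θ in (0:ℝ)..(π/2), θ ^ d * (π - 2 * θ))
        - (1/6) * (∫ θ in (0:ℝ)..(π/2), θ ^ d * (π - 2 * θ) ^ 3)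
        = ∫ θ in (0:ℝ)..(π/2), (θ ^ d * (π - 2 * θ) - (1/6) * (θ ^ d * (π - 2 * θ) ^ 3)) := by
      rw [intervalIntegral.integral_sub ((Continuous.intervalIntegrable (by fun_prop)) _ _)
        ((Continuous.intervalIntegrable (by fun_prop)) _ _),
        intervalIntegral.integral_const_mul]
    rw [h]
    apply intervalIntegral.integral_mono_on (by positivity)
    · exact (Continuous.intervalIntegrable (by fun_prop)) _ _
    · exact (Continuous.intervalIntegrable (by fun_prop)) _ _
    · intro θ hθ
      have h1 : 0 ≤ π - 2 * θ := by
        have := hθ.2; linarith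
      have h2 : Real.sin (2 * θ) = Real.sin (π - 2 * θ) := (Real.sin_pi_sub (2*θ)).symm
      have h3 : (π - 2 * θ) - (π - 2 * θ) ^ 3 / 6 ≤ Real.sin (π - 2 * θ) :=
        my_sin_ge_sub_cube h1
      have h4 : (0:ℝ) ≤ θ ^ d := pow_nonneg hθ.1 d
      rw [h2]
      nlinarith [mul_le_mul_of_nonneg_left h3 h4]
  -- algebraic simplification of the bounding quantities
  have hU : ∀ d : ℕ, (π * ((π/2) ^ (d+1) / (d+1)) - 2 * ((π/2) ^ (d+2) / (d+2)))
        * (2 / π) ^ d * (d:ℝ) ^ 2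
      = (π^2/2) * ((d:ℝ)/((d:ℝ)+1) * ((d:ℝ)/((d:ℝ)+2))) := by
    intro d
    have h1 : ((d:ℝ)+1) ≠ 0 := by positivity
    have h2 : ((d:ℝ)+2) ≠ 0 := by positivity
    have h2d : ((2:ℝ)) ^ d ≠ 0 := by positivity
    have hπd : (π:ℝ) ^ d ≠ 0 := pow_ne_zero _ hπ0
    push_cast
    simp only [div_pow, pow_succ]
    field_simp
    ring
  have hE : ∀ d : ℕ, ((π^3 * ((π/2) ^ (d+1) / (d+1)) - 6 * π^2 * ((π/2) ^ (d+2) / (d+2))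
        + 12 * π * ((π/2) ^ (d+3) / (d+3)) - 8 * ((π/2) ^ (d+4) / (d+4))) * (1/6))
        * (2 / π) ^ d * (d:ℝ) ^ 2
      = (π^4/2) * ((d:ℝ)/((d:ℝ)+1) * ((d:ℝ)/((d:ℝ)+2)) * (((d:ℝ)+3)⁻¹ * ((d:ℝ)+4)⁻¹)) := by
    intro d
    have h1 : ((d:ℝ)+1) ≠ 0 := by positivity
    have h2 : ((d:ℝ)+2) ≠ 0 := by positivity
    have h3 : ((d:ℝ)+3) ≠ 0 := by positivity
    have h4 : ((d:ℝ)+4) ≠ 0 := by positivity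
    have h2d : ((2:ℝ)) ^ d ≠ 0 := by positivity
    have hπd : (π:ℝ) ^ d ≠ 0 := pow_ne_zero _ hπ0
    push_cast
    simp only [div_pow, pow_succ]
    field_simp
    ring
  -- limits of the bounding sequences
  have hd1 : Tendsto (fun d : ℕ => (d:ℝ)/((d:ℝ)+1) * ((d:ℝ)/((d:ℝ)+2))) atTop (nhds 1) := by
    have := (tendsto_natCast_div_add_atTop (1:ℝ)).mul (tendsto_natCast_div_add_atTop (2:ℝ))
    simpa using this
  have hd0 : Tendsto (fun d : ℕ => (d:ℝ)/((d:ℝ)+1) * ((d:ℝ)/((d:ℝ)+2))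
      * (((d:ℝ)+3)⁻¹ * ((d:ℝ)+4)⁻¹)) atTop (nhds 0) := by
    have h3 : Tendsto (fun d : ℕ => ((d:ℝ)+3)⁻¹) atTop (nhds 0) :=
      Tendsto.inv_tendsto_atTop (tendsto_atTop_add_const_right _ 3 tendsto_natCast_atTop_atTop)
    have h4 : Tendsto (fun d : ℕ => ((d:ℝ)+4)⁻¹) atTop (nhds 0) :=
      Tendsto.inv_tendsto_atTop (tendsto_atTop_add_const_right _ 4 tendsto_natCast_atTop_atTop)
    have := hd1.mul (h3.mul h4)
    simpa using this
  -- the bounding sequences converge to π²/2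
  have hUtend : Tendsto (fun d : ℕ => (π^2/2) * ((d:ℝ)/((d:ℝ)+1) * ((d:ℝ)/((d:ℝ)+2))))
      atTop (nhds (π^2/2)) := by
    have := hd1.const_mul (π^2/2)
    simpa using this
  have hLtend : Tendsto (fun d : ℕ => (π^2/2) * ((d:ℝ)/((d:ℝ)+1) * ((d:ℝ)/((d:ℝ)+2)))
      - (π^4/2) * ((d:ℝ)/((d:ℝ)+1) * ((d:ℝ)/((d:ℝ)+2)) * (((d:ℝ)+3)⁻¹ * ((d:ℝ)+4)⁻¹)))
      atTop (nhds (π^2/2)) := by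
    have := hUtend.sub (hd0.const_mul (π^4/2))
    simpa using this
  -- squeeze
  apply tendsto_of_tendsto_of_tendsto_of_le_of_le hLtend hUtend
  · intro d
    have key := hlb d
    have hmul : ((∫ θ in (0:ℝ)..(π/2), θ ^ d * (π - 2 * θ))
        - (1/6) * (∫ θ in (0:ℝ)..(π/2), θ ^ d * (π - 2 * θ) ^ 3)) * (2 / π) ^ d * (d:ℝ) ^ 2
        ≤ (∫ θ in (0 : ℝ)..(π / 2), θ ^ d * Real.sin (2 * θ)) * (2 / π) ^ d * (d : ℝ) ^ 2 := by
      apply mul_le_mul_of_nonneg_right _ (by positivity)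
      exact mul_le_mul_of_nonneg_right key (by positivity)
    calc (π^2/2) * ((d:ℝ)/((d:ℝ)+1) * ((d:ℝ)/((d:ℝ)+2)))
          - (π^4/2) * ((d:ℝ)/((d:ℝ)+1) * ((d:ℝ)/((d:ℝ)+2)) * (((d:ℝ)+3)⁻¹ * ((d:ℝ)+4)⁻¹))
        = ((∫ θ in (0:ℝ)..(π/2), θ ^ d * (π - 2 * θ))
          - (1/6) * (∫ θ in (0:ℝ)..(π/2), θ ^ d * (π - 2 * θ) ^ 3)) * (2 / π) ^ d * (d:ℝ) ^ 2 := by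
          rw [int_lin, int_cub, ← hU d, ← hE d]; ring
      _ ≤ _ := hmul
  · intro d
    have key := hub d
    have hmul : (∫ θ in (0 : ℝ)..(π / 2), θ ^ d * Real.sin (2 * θ)) * (2 / π) ^ d * (d : ℝ) ^ 2
        ≤ (∫ θ in (0:ℝ)..(π/2), θ ^ d * (π - 2 * θ)) * (2 / π) ^ d * (d:ℝ) ^ 2 := by
      apply mul_le_mul_of_nonneg_right _ (by positivity)
      exact mul_le_mul_of_nonneg_right key (by positivity)
    calc (∫ θ in (0 : ℝ)..(π / 2), θ ^ d * Real.sin (2 * θ)) * (2 / π) ^ d * (d : ℝ) ^ 2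
        ≤ (∫ θ in (0:ℝ)..(π/2), θ ^ d * (π - 2 * θ)) * (2 / π) ^ d * (d:ℝ) ^ 2 := hmul
      _ = (π^2/2) * ((d:ℝ)/((d:ℝ)+1) * ((d:ℝ)/((d:ℝ)+2))) := by rw [int_lin, hU d]
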